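/- For every pure braid β ∈ B_n, writing SGE(β) = (M, id), the matrix M is symmetric: Mᵀ = M. -/

import Mathlib

/-- The braid relations. -/
def braidRels (n : ℕ) : Set (FreeGroup (Fin (n - 1))) :=
  {r | (∃ i j : Fin (n - 1), (j : ℕ) = (i : ℕ) + 1 ∧
        r = .of i * .of j * .of i * (.of j * .of i * .of j)⁻¹) ∨
       (∃ i j : Fin (n - 1), (i : ℕ) + 2 ≤ (j : ℕ) ∧
        r = .of i * .of j * (.of j * .of i)⁻¹)}

/-- The braid group `B_n`. -/
abbrev BraidGroup (n : ℕ) := PresentedGroup (braidRels n)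

/-- The Artin generator `σ_{k+1}` (0-based index `k`). -/
def braidGen {n : ℕ} (i : Fin (n - 1)) : BraidGroup n := PresentedGroup.of i

/-- The strand index `k`, viewed inside `Fin n`. -/
def lo {n : ℕ} (k : Fin (n - 1)) : Fin n := ⟨k, by have := k.isLt; omega⟩

/-- The strand index `k + 1`, viewed inside `Fin n`. -/
def hi {n : ℕ} (k : Fin (n - 1)) : Fin n := ⟨(k : ℕ) + 1, by have := k.isLt; omega⟩

/-- The action of `S_n` on `n × n` integer matrices, simultaneously permuting rows and
columns: `(π·M)[i,j] = M[π⁻¹ i, π⁻¹ j]`. -/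
def matPermAct (n : ℕ) :
    Equiv.Perm (Fin n) →* MulAut (Multiplicative (Matrix (Fin n) (Fin n) ℤ)) where
  toFun π :=
    { toFun := fun M => Multiplicative.ofAdd fun i j => Multiplicative.toAdd M (π⁻¹ i) (π⁻¹ j)
      invFun := fun M => Multiplicative.ofAdd fun i j => Multiplicative.toAdd M (π i) (π j)
      left_inv := fun M => by
        change (fun i j => (M : Matrix (Fin n) (Fin n) ℤ) (π⁻¹ (π i)) (π⁻¹ (π j))) = M
        simp
      right_inv := fun M => by
        change (fun i j => (M : Matrix (Fin n) (Fin n) ℤ) (π (π⁻¹ i)) (π (π⁻¹ j))) = M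
        simp
      map_mul' := fun M M' => rfl }
  map_one' := by ext M; simp
  map_mul' := fun π ρ => by
    ext M
    rfl

/-- The semidirect product `Mat_n(ℤ) ⋊ S_n`. -/
abbrev SGEGroup (n : ℕ) :=
  SemidirectProduct (Multiplicative (Matrix (Fin n) (Fin n) ℤ)) (Equiv.Perm (Fin n))
    (matPermAct n)

/-- The value `(O_{k,k+1}, (k, k+1))` of the super-Gauss-Epple homomorphism on the
generator `σ_k`, where `O_{i,j}` is the matrix with a single `1` entry at `(i,j)`. -/
def sgeGen {n : ℕ} (k : Fin (n - 1)) : SGEGroup n :=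
  ⟨Multiplicative.ofAdd (Matrix.single (lo k) (hi k) 1), Equiv.swap (lo k) (hi k)⟩

open Matrix in
/-- For every pure braid `β`, writing `SGE(β) = (M, id)`, the matrix `M` is symmetric. -/
theorem SGE_pure_symmetric (n : ℕ) (hn : 2 ≤ n)
    (SGE : BraidGroup n →* SGEGroup n)
    (hSGE : ∀ k : Fin (n - 1), SGE (braidGen k) = sgeGen k)
    (β : BraidGroup n) (hpure : (SGE β).right = 1) :
    (Multiplicative.toAdd (SGE β).left)ᵀ = Multiplicative.toAdd (SGE β).left := by
  -- the "inversion" cocycle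
  set g : Fin n → Fin n → ℤ := fun i j => if i < j then 1 else 0 with hg
  set P : SGEGroup n → Prop := fun x => ∀ i j : Fin n,
      Multiplicative.toAdd x.left i j - Multiplicative.toAdd x.left j i =
        g i j - g (x.right⁻¹ i) (x.right⁻¹ j) with hP
  have haction : ∀ (π : Equiv.Perm (Fin n)) (M : Multiplicative (Matrix (Fin n) (Fin n) ℤ))
      (i j : Fin n), Multiplicative.toAdd ((matPermAct n π) M) i j =
        Multiplicative.toAdd M (π⁻¹ i) (π⁻¹ j) := fun _ _ _ _ => rfl
  have htoAdd : ∀ (M N : Multiplicative (Matrix (Fin n) (Fin n) ℤ)) (i j : Fin n),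
      Multiplicative.toAdd (M * N) i j =
        Multiplicative.toAdd M i j + Multiplicative.toAdd N i j := fun _ _ _ _ => rfl
  have htoAddInv : ∀ (M : Multiplicative (Matrix (Fin n) (Fin n) ℤ)) (i j : Fin n),
      Multiplicative.toAdd M⁻¹ i j = -(Multiplicative.toAdd M i j) := fun _ _ _ => rfl
  have hone : P 1 := by
    intro i j
    simp [hP, SemidirectProduct.one_left, SemidirectProduct.one_right]
  have hmul : ∀ x y : SGEGroup n, P x → P y → P (x * y) := by
    intro x y hx hy i j
    rw [SemidirectProduct.mul_left, htoAdd, htoAdd, haction, haction,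
      SemidirectProduct.mul_right]
    have h1 := hx i j
    have h2 := hy (x.right⁻¹ i) (x.right⁻¹ j)
    have : ((x.right * y.right)⁻¹ i) = y.right⁻¹ (x.right⁻¹ i) := by
      simp [Equiv.Perm.mul_apply]
    rw [this]
    have : ((x.right * y.right)⁻¹ j) = y.right⁻¹ (x.right⁻¹ j) := by
      simp [Equiv.Perm.mul_apply]
    rw [this]
    omega
  have hinv : ∀ x : SGEGroup n, P x → P x⁻¹ := by
    intro x hx i j
    rw [SemidirectProduct.inv_left, haction, haction, SemidirectProduct.inv_right]
    simp only [inv_inv]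
    rw [htoAddInv, htoAddInv]
    have h1 := hx (x.right i) (x.right j)
    simp only [Equiv.Perm.inv_def, Equiv.symm_apply_apply] at h1
    omega
  have hgen : ∀ k : Fin (n - 1), P (sgeGen k) := by
    intro k i j
    have hk : (lo k : Fin n).val + 1 = (hi k : Fin n).val := rfl
    show Multiplicative.toAdd (Multiplicative.ofAdd (Matrix.single (lo k) (hi k) (1:ℤ))) i j
        - Multiplicative.toAdd (Multiplicative.ofAdd (Matrix.single (lo k) (hi k) (1:ℤ))) j i
        = g i j - g ((Equiv.swap (lo k) (hi k))⁻¹ i) ((Equiv.swap (lo k) (hi k))⁻¹ j)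
    rw [Equiv.swap_inv]
    simp only [toAdd_ofAdd, Matrix.single, Matrix.of_apply, hg,
      Equiv.swap_apply_def, Fin.lt_def]
    simp only [← Fin.val_eq_val]
    split_ifs <;> omega
  have key : ∀ γ : BraidGroup n, P (SGE γ) := by
    intro γ
    refine QuotientGroup.induction_on γ ?_
    intro x
    refine FreeGroup.induction_on x ?_ ?_ ?_ ?_
    · show P (SGE 1); rw [_root_.map_one]; exact hone
    · intro k
      show P (SGE (braidGen k))
      rw [hSGE]; exact hgen k
    · intro k h
      have : ((FreeGroup.of k)⁻¹ : FreeGroup (Fin (n-1))) = (FreeGroup.of k : FreeGroup (Fin (n-1)))⁻¹ := rfl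
      show P (SGE ((braidGen k)⁻¹))
      rw [_root_.map_inv]
      exact hinv _ h
    · intro x y hx hy
      show P (SGE ((QuotientGroup.mk x : BraidGroup n) * (QuotientGroup.mk y : BraidGroup n)))
      convert hmul _ _ hx hy using 1
      exact SGE.map_mul _ _
  have hβ := key β
  ext i j
  have h1 := hβ j i
  rw [hpure] at h1
  simp only [inv_one, Equiv.Perm.one_apply] at h1
  simp only [Matrix.transpose_apply]
  omega
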